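/- Let q ∈ ℕ with q ≥ 1 and let τ ∈ ℝ satisfy 0 ≤ τ ≤ q − 1. Then Σ_{k=q}^{∞} 2·(τ/2)^k / k! ≤ 4·τ^q / (2^q · q!). In particular, combined with |J_k(τ)| ≤ (τ/2)^k/k!, one gets Σ_{k=q}^{∞} 2·|J_k(τ)| ≤ 4·τ^q/(2^q·q!). -/

import Mathlib

open Real

/-- The Bessel function of the first kind of (natural) order `k`. -/
noncomputable def besselJ (k : ℕ) (τ : ℝ) : ℝ :=
  ∑' m : ℕ, (-1 : ℝ) ^ m * (τ / 2) ^ (2 * m + k) /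
    ((m.factorial : ℝ) * ((m + k).factorial : ℝ))

open MeasureTheory intervalIntegral Finset in
lemma wallis_prod (n : ℕ) :
    ∏ i ∈ Finset.range n, ((2 * (i : ℝ) + 1) / (2 * i + 2)) =
      ((2 * n).factorial : ℝ) / (4 ^ n * ((n.factorial : ℝ)) ^ 2) := by
  induction n with
  | zero => simp
  | succ k ih =>
    rw [Finset.prod_range_succ, ih]
    have h1 : (2 * (k + 1)) = 2 * k + 1 + 1 := by ring
    rw [h1, Nat.factorial_succ, Nat.factorial_succ, Nat.factorial_succ]
    have hk : ((k.factorial : ℝ)) ≠ 0 := Nat.cast_ne_zero.mpr k.factorial_ne_zero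
    have h2k : (((2 * k).factorial : ℝ)) ≠ 0 := Nat.cast_ne_zero.mpr (2 * k).factorial_ne_zero
    push_cast
    field_simp
    ring

lemma W (m : ℕ) : ∀ n : ℕ,
    ∫ θ in (0:ℝ)..π, Real.cos θ ^ (2 * m) * Real.sin θ ^ (2 * n) =
      π * ((2 * m).factorial : ℝ) * ((2 * n).factorial : ℝ) /
        (4 ^ (m + n) * (m.factorial : ℝ) * (n.factorial : ℝ) * ((m + n).factorial : ℝ)) := by
  induction m with
  | zero =>
    intro n
    simp only [Nat.mul_zero, pow_zero, one_mul, Nat.zero_add, Nat.factorial_zero]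
    rw [integral_sin_pow_even, wallis_prod]
    have hn : ((n.factorial : ℝ)) ≠ 0 := Nat.cast_ne_zero.mpr n.factorial_ne_zero
    have h4 : (4 : ℝ) ^ n ≠ 0 := by positivity
    push_cast
    field_simp
  | succ m ih =>
    intro n
    have key : ∀ θ : ℝ, Real.cos θ ^ (2 * (m + 1)) * Real.sin θ ^ (2 * n) =
        Real.cos θ ^ (2 * m) * Real.sin θ ^ (2 * n)
          - Real.cos θ ^ (2 * m) * Real.sin θ ^ (2 * (n + 1)) := by
      intro θ
      have := Real.sin_sq_add_cos_sq θ
      have hc : Real.cos θ ^ 2 = 1 - Real.sin θ ^ 2 := by linarith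
      have h1 : (2 * (m + 1)) = 2 * m + 2 := by ring
      have h2 : (2 * (n + 1)) = 2 * n + 2 := by ring
      rw [h1, h2, pow_add, pow_add, hc]
      ring
    rw [intervalIntegral.integral_congr (g := fun θ => Real.cos θ ^ (2 * m) * Real.sin θ ^ (2 * n)
          - Real.cos θ ^ (2 * m) * Real.sin θ ^ (2 * (n + 1))) (fun θ _ => key θ),
        intervalIntegral.integral_sub
          (by apply Continuous.intervalIntegrable; fun_prop)
          (by apply Continuous.intervalIntegrable; fun_prop),
        ih n, ih (n + 1)]
    have e1 : 2 * (m + 1) = 2 * m + 1 + 1 := by ring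
    have e2 : 2 * (n + 1) = 2 * n + 1 + 1 := by ring
    have e3 : m + (n + 1) = m + n + 1 := by ring
    have e4 : m + 1 + n = m + n + 1 := by ring
    simp only [e1, e2, e3, e4, Nat.factorial_succ]
    have hm : ((m.factorial : ℝ)) ≠ 0 := Nat.cast_ne_zero.mpr m.factorial_ne_zero
    have hn : ((n.factorial : ℝ)) ≠ 0 := Nat.cast_ne_zero.mpr n.factorial_ne_zero
    have hmn : (((m + n).factorial : ℝ)) ≠ 0 := Nat.cast_ne_zero.mpr (m + n).factorial_ne_zero
    have h2m : (((2 * m).factorial : ℝ)) ≠ 0 := Nat.cast_ne_zero.mpr (2 * m).factorial_ne_zero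
    have h2n : (((2 * n).factorial : ℝ)) ≠ 0 := Nat.cast_ne_zero.mpr (2 * n).factorial_ne_zero
    have h4 : (4 : ℝ) ^ (m + n) ≠ 0 := by positivity

    push_cast
    field_simp
    ring

open MeasureTheory intervalIntegral Finset in
lemma poisson (n : ℕ) (x : ℝ) :
    ∫ θ in (0:ℝ)..π, Real.cos (x * Real.cos θ) * Real.sin θ ^ (2 * n) =
      π * ((2 * n).factorial : ℝ) / (4 ^ n * (n.factorial : ℝ)) *
        ∑' m : ℕ, (-1 : ℝ) ^ m * (x / 2) ^ (2 * m) / ((m.factorial : ℝ) * ((m + n).factorial : ℝ)) := by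
  set F : ℕ → ℝ → ℝ := fun m θ =>
    ((-1 : ℝ) ^ m * x ^ (2 * m) / ((2 * m).factorial : ℝ)) *
      (Real.cos θ ^ (2 * m) * Real.sin θ ^ (2 * n)) with hF
  have hsum : ∀ θ : ℝ, HasSum (fun m => F m θ)
      (Real.cos (x * Real.cos θ) * Real.sin θ ^ (2 * n)) := by
    intro θ
    have := (Real.hasSum_cos (x * Real.cos θ)).mul_right (Real.sin θ ^ (2 * n))
    convert this using 2 with m
    · rfl
    simp only [hF]
    rw [mul_pow]
    ring
  have hInt : ∀ m : ℕ, IntegrableOn (F m) (Set.Ioc 0 π) volume := by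
    intro m
    exact (Continuous.integrableOn_Ioc (by fun_prop))
  have hNorm : ∀ m : ℕ, (∫ θ in Set.Ioc (0:ℝ) π, ‖F m θ‖) ≤ |x| ^ (2 * m) / ((2 * m).factorial : ℝ) * π := by
    intro m
    have hb : ∀ θ ∈ Set.Ioc (0:ℝ) π, ‖‖F m θ‖‖ ≤ |x| ^ (2 * m) / ((2 * m).factorial : ℝ) := by
      intro θ _
      rw [norm_norm, hF]
      simp only [norm_mul, norm_div, norm_pow, norm_neg, norm_one, one_pow, one_mul,
        Real.norm_eq_abs]
      have h1 : |Real.cos θ| ≤ 1 := Real.abs_cos_le_one θ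
      have h2 : |Real.sin θ| ≤ 1 := Real.abs_sin_le_one θ
      have h3 : |Real.cos θ| ^ (2*m) ≤ 1 := pow_le_one₀ (abs_nonneg _) h1
      have h4 : |Real.sin θ| ^ (2*n) ≤ 1 := pow_le_one₀ (abs_nonneg _) h2
      have h5 : |((2 * m).factorial : ℝ)| = ((2 * m).factorial : ℝ) := abs_of_pos (by positivity)
      rw [h5]
      have hfac : (0:ℝ) < ((2 * m).factorial : ℝ) := by positivity
      calc |x| ^ (2*m) / ((2 * m).factorial : ℝ) * (|Real.cos θ| ^ (2*m) * |Real.sin θ| ^ (2*n))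
          ≤ |x| ^ (2*m) / ((2 * m).factorial : ℝ) * 1 := by
            apply mul_le_mul_of_nonneg_left _ (by positivity)
            calc |Real.cos θ| ^ (2*m) * |Real.sin θ| ^ (2*n) ≤ 1 * 1 :=
              mul_le_mul h3 h4 (by positivity) zero_le_one
            _ = 1 := by ring
        _ = |x| ^ (2*m) / ((2 * m).factorial : ℝ) := by ring
    have := MeasureTheory.norm_setIntegral_le_of_norm_le_const (μ := volume)
      (s := Set.Ioc (0:ℝ) π) (f := fun θ => ‖F m θ‖)
      (by rw [Real.volume_Ioc]; exact ENNReal.ofReal_lt_top) hb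
    rw [Real.volume_real_Ioc_of_le pi_nonneg, sub_zero] at this
    have hpos : (0:ℝ) ≤ ∫ θ in Set.Ioc (0:ℝ) π, ‖F m θ‖ :=
      integral_nonneg fun θ => norm_nonneg _
    rw [Real.norm_of_nonneg hpos] at this
    simpa using this
  have hSummable : Summable fun m : ℕ => ∫ θ in Set.Ioc (0:ℝ) π, ‖F m θ‖ := by
    apply Summable.of_nonneg_of_le (fun m => integral_nonneg fun θ => norm_nonneg _)
      (fun m => (hNorm m).trans ?_)
      (((Real.summable_pow_div_factorial (x ^ 2)).mul_right π))
    have h1 : |x| ^ (2 * m) = (x ^ 2) ^ m := by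
      rw [pow_mul, sq_abs]
    have h2 : ((m.factorial : ℝ)) ≤ ((2 * m).factorial : ℝ) := by
      exact_mod_cast Nat.factorial_le (by omega)
    rw [h1]
    apply mul_le_mul_of_nonneg_right _ pi_nonneg
    apply div_le_div_of_nonneg_left (by positivity) (by positivity) h2
  have swap := MeasureTheory.integral_tsum_of_summable_integral_norm hInt hSummable
  have lhs_eq : ∫ θ in (0:ℝ)..π, Real.cos (x * Real.cos θ) * Real.sin θ ^ (2 * n) =
      ∫ θ in Set.Ioc (0:ℝ) π, (∑' m, F m θ) := by
    rw [intervalIntegral.integral_of_le pi_nonneg]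
    exact setIntegral_congr_fun measurableSet_Ioc fun θ _ => ((hsum θ).tsum_eq).symm
  rw [lhs_eq, ← swap]
  have term_eq : ∀ m : ℕ, (∫ θ in Set.Ioc (0:ℝ) π, F m θ) =
      π * ((2 * n).factorial : ℝ) / (4 ^ n * (n.factorial : ℝ)) *
        ((-1 : ℝ) ^ m * (x / 2) ^ (2 * m) / ((m.factorial : ℝ) * ((m + n).factorial : ℝ))) := by
    intro m
    rw [hF]
    simp only
    rw [MeasureTheory.integral_const_mul, ← intervalIntegral.integral_of_le pi_nonneg, W m n]
    have hx2 : (x / 2) ^ (2 * m) = x ^ (2 * m) / 4 ^ m := by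
      rw [div_pow, pow_mul, pow_mul]
      norm_num
    rw [hx2, pow_add]
    have h2m : (((2 * m).factorial : ℝ)) ≠ 0 := Nat.cast_ne_zero.mpr (2 * m).factorial_ne_zero
    have hm : ((m.factorial : ℝ)) ≠ 0 := Nat.cast_ne_zero.mpr m.factorial_ne_zero
    have hn : ((n.factorial : ℝ)) ≠ 0 := Nat.cast_ne_zero.mpr n.factorial_ne_zero
    have hmn : (((m + n).factorial : ℝ)) ≠ 0 := Nat.cast_ne_zero.mpr (m + n).factorial_ne_zero
    have h4m : (4:ℝ) ^ m ≠ 0 := by positivity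
    have h4n : (4:ℝ) ^ n ≠ 0 := by positivity
    field_simp
  rw [tsum_congr term_eq, tsum_mul_left]

open MeasureTheory intervalIntegral Finset in
lemma besselJ_le (n : ℕ) {x : ℝ} (hx : 0 ≤ x) :
    |besselJ n x| ≤ (x / 2) ^ n / (n.factorial : ℝ) := by
  have hrw : besselJ n x = (x / 2) ^ n *
      ∑' m : ℕ, (-1 : ℝ) ^ m * (x / 2) ^ (2 * m) / ((m.factorial : ℝ) * ((m + n).factorial : ℝ)) := by
    rw [besselJ, ← tsum_mul_left]
    congr 1; funext m
    rw [pow_add]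
    ring
  set S := ∑' m : ℕ, (-1 : ℝ) ^ m * (x / 2) ^ (2 * m) /
      ((m.factorial : ℝ) * ((m + n).factorial : ℝ)) with hSdef
  set I := ∫ θ in (0:ℝ)..π, Real.cos (x * Real.cos θ) * Real.sin θ ^ (2 * n) with hIdef
  set c : ℝ := π * ((2 * n).factorial : ℝ) / (4 ^ n * (n.factorial : ℝ)) with hcdef
  have hc : 0 < c := by
    rw [hcdef]
    have := pi_pos
    positivity
  have hIc : I = c * S := poisson n x
  -- bound |I|
  have hInorm : |I| ≤ ∫ θ in (0:ℝ)..π, Real.sin θ ^ (2 * n) := by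
    have h1 : |I| ≤ ∫ θ in (0:ℝ)..π, |Real.cos (x * Real.cos θ) * Real.sin θ ^ (2 * n)| :=
      intervalIntegral.abs_integral_le_integral_abs pi_nonneg
    refine h1.trans (intervalIntegral.integral_mono_on pi_nonneg
      (by apply Continuous.intervalIntegrable; fun_prop : IntervalIntegrable (fun θ => Real.cos (x * Real.cos θ) * Real.sin θ ^ (2 * n)) volume 0 π).abs
      (by apply Continuous.intervalIntegrable; fun_prop) ?_)
    intro θ _
    have hs : (0:ℝ) ≤ Real.sin θ ^ (2 * n) := (even_two_mul n).pow_nonneg _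
    rw [abs_mul, abs_of_nonneg hs]
    calc |Real.cos (x * Real.cos θ)| * Real.sin θ ^ (2 * n)
        ≤ 1 * Real.sin θ ^ (2 * n) :=
          mul_le_mul_of_nonneg_right (Real.abs_cos_le_one _) hs
      _ = Real.sin θ ^ (2 * n) := one_mul _
  have hsin : ∫ θ in (0:ℝ)..π, Real.sin θ ^ (2 * n) =
      π * ((2 * n).factorial : ℝ) / (4 ^ n * ((n.factorial : ℝ)) ^ 2) := by
    have := W 0 n
    simp only [Nat.mul_zero, pow_zero, one_mul, Nat.zero_add, Nat.factorial_zero,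
      Nat.cast_one, mul_one] at this
    rw [this]
    ring
  have hSle : |S| ≤ 1 / (n.factorial : ℝ) := by
    have h2 : |S| = |I| / c := by
      rw [hIc, abs_mul, abs_of_pos hc, mul_comm, mul_div_assoc, div_self hc.ne', mul_one]
    rw [h2, div_le_iff₀ hc, hcdef]
    refine hInorm.trans ?_
    rw [hsin]
    have hn : (0:ℝ) < (n.factorial : ℝ) := by positivity
    have h2n : (0:ℝ) < ((2*n).factorial : ℝ) := by positivity
    have h4 : (0:ℝ) < (4:ℝ) ^ n := by positivity
    rw [div_eq_div_iff (by positivity) (by positivity)] at *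
    field_simp
    ring_nf
    exact le_rfl
  calc |besselJ n x| = (x / 2) ^ n * |S| := by
        rw [hrw, abs_mul, abs_of_nonneg (by positivity : (0:ℝ) ≤ (x/2)^n)]
    _ ≤ (x / 2) ^ n * (1 / (n.factorial : ℝ)) :=
        mul_le_mul_of_nonneg_left hSle (by positivity)
    _ = (x / 2) ^ n / (n.factorial : ℝ) := by ring

theorem tail_bound (q : ℕ) (hq : 1 ≤ q) (τ : ℝ) (hτ0 : 0 ≤ τ) (hτ : τ ≤ (q : ℝ) - 1) :
    (∑' k : ℕ, 2 * (τ / 2) ^ (q + k) / ((q + k).factorial : ℝ)) ≤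
      4 * τ ^ q / (2 ^ q * (q.factorial : ℝ)) ∧
    (∑' k : ℕ, 2 * |besselJ (q + k) τ|) ≤ 4 * τ ^ q / (2 ^ q * (q.factorial : ℝ)) := by
  set a : ℕ → ℝ := fun k => 2 * (τ / 2) ^ (q + k) / ((q + k).factorial : ℝ) with ha
  set b : ℕ → ℝ := fun k => (2 * (τ / 2) ^ q / (q.factorial : ℝ)) * (1 / 2) ^ k with hb
  have hab : ∀ k, a k ≤ b k := by
    intro k
    have hfac : ((q.factorial : ℝ)) * ((q:ℝ) + 1) ^ k ≤ ((q + k).factorial : ℝ) := by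
      exact_mod_cast Nat.factorial_mul_pow_le_factorial (m := q) (n := k)
    have hτk : τ ^ k ≤ ((q:ℝ) + 1) ^ k :=
      pow_le_pow_left₀ hτ0 (by linarith) k
    have hkey : τ ^ k * ((q.factorial : ℝ)) ≤ ((q + k).factorial : ℝ) := by
      calc τ ^ k * ((q.factorial : ℝ)) ≤ ((q:ℝ) + 1) ^ k * ((q.factorial : ℝ)) := by
            apply mul_le_mul_of_nonneg_right hτk (by positivity)
        _ = ((q.factorial : ℝ)) * ((q:ℝ) + 1) ^ k := by ring
        _ ≤ _ := hfac
    have hqk : (0:ℝ) < ((q + k).factorial : ℝ) := by positivity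
    have hqf : (0:ℝ) < ((q.factorial : ℝ)) := by positivity
    have h2k : (0:ℝ) < (2:ℝ) ^ k := by positivity
    have hτq : (0:ℝ) ≤ (τ / 2) ^ q := by positivity
    simp only [ha, hb]
    rw [div_le_iff₀ hqk]
    have hC : (0:ℝ) ≤ 2 * (τ / 2) ^ q * (1 / 2) ^ k / (q.factorial : ℝ) := by positivity
    have e : 2 * (τ / 2) ^ (q + k) =
        (2 * (τ / 2) ^ q * (1 / 2) ^ k / (q.factorial : ℝ)) * (τ ^ k * (q.factorial : ℝ)) := by
      field_simp
      ring
    rw [e]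
    calc (2 * (τ / 2) ^ q * (1 / 2) ^ k / (q.factorial : ℝ)) * (τ ^ k * (q.factorial : ℝ))
        ≤ (2 * (τ / 2) ^ q * (1 / 2) ^ k / (q.factorial : ℝ)) * ((q + k).factorial : ℝ) :=
          mul_le_mul_of_nonneg_left hkey hC
      _ = 2 * (τ / 2) ^ q / (q.factorial : ℝ) * (1 / 2) ^ k * ((q + k).factorial : ℝ) := by ring
  have hbsum : Summable b := (summable_geometric_of_lt_one (by norm_num) (by norm_num)).mul_left _
  have hanneg : ∀ k, 0 ≤ a k := by
    intro k
    have : (0:ℝ) ≤ (τ / 2) ^ (q + k) := by positivity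
    have : (0:ℝ) < ((q + k).factorial : ℝ) := by positivity
    simp only [ha]
    positivity
  have hasum : Summable a := Summable.of_nonneg_of_le hanneg hab hbsum
  have htsumb : ∑' k, b k = 4 * τ ^ q / (2 ^ q * (q.factorial : ℝ)) := by
    rw [hb, tsum_mul_left, tsum_geometric_of_lt_one (by norm_num) (by norm_num)]
    have hqf : ((q.factorial : ℝ)) ≠ 0 := by positivity
    rw [div_pow]
    norm_num
    field_simp
    ring
  have part1 : ∑' k, a k ≤ 4 * τ ^ q / (2 ^ q * (q.factorial : ℝ)) := by
    rw [← htsumb]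
    exact Summable.tsum_le_tsum hab hasum hbsum
  refine ⟨part1, ?_⟩
  set c : ℕ → ℝ := fun k => 2 * |besselJ (q + k) τ| with hc
  have hca : ∀ k, c k ≤ a k := by
    intro k
    have := besselJ_le (q + k) hτ0
    simp only [hc, ha, mul_div_assoc]
    linarith
  have hcsum : Summable c :=
    Summable.of_nonneg_of_le (fun k => by positivity) hca hasum
  exact (Summable.tsum_le_tsum hca hcsum hasum).trans part1
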